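/- Let H be a Hopf algebra over a field K generated as an algebra by a set X consisting of grouplike elements g (Δ(g)=g⊗g) and skew-primitive elements x (Δ(x) = x⊗g + g'⊗x with g, g' ∈ X grouplike and invertible, with g, g' acting invertibly on the modules below). Let A be a left H-module algebra and S ⊆ A a left and right Ore set such that A → S⁻¹A is injective. Then there is at most one H-module algebra structure on S⁻¹A extending the given H-action on A; i.e. if two left H-module structures on S⁻¹A both satisfy (a) the inclusion A ↪ S⁻¹A is H-linear and (b) u·(φψ) = Σ (u_{(1)}·φ)(u_{(2)}·ψ) for all u ∈ H and φ, ψ ∈ S⁻¹A, then they coincide. -/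
import Mathlib

open TensorProduct

/-- Uniqueness of the module-algebra extension of a Hopf algebra action to an Ore
localization.  Let `H` be a Hopf algebra over a field `K`, generated as an algebra by a
set `X` of grouplike and skew-primitive elements (`Δ(x) = x⊗g + g'⊗x` with `g, g' ∈ X`
grouplike, invertible, and acting invertibly on the modules below).  Let `A` be a left
`H`-module algebra and `S ⊆ A` a left and right Ore set such that `A → S⁻¹A` is
injective; here `S⁻¹A` is realized as a `K`-algebra `B` with an injective algebra map
`ι : A → B` inverting `S` and such that every element of `B` is a left fraction.  Then
there is at most one `H`-module algebra structure on `S⁻¹A` extending the action on `A`: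
any two actions `ρ, σ` satisfying (a) `ι` is `H`-linear and (b) the module-algebra law
coincide. -/
theorem ore_localization_module_algebra_unique
    (K H A B : Type*) [Field K] [Ring H] [HopfAlgebra K H]
    [Ring A] [Algebra K A] [Ring B] [Algebra K B]
    (act0 : H →ₐ[K] Module.End K A)
    (hact0_one : ∀ u : H, act0 u (1 : A) = Coalgebra.counit (R := K) u • (1 : A))
    (hact0_mul : ∀ (u : H) (φ ψ : A),
      act0 u (φ * ψ) =
        (LinearMap.mul' K A)
          ((TensorProduct.map (act0.toLinearMap.flip φ) (act0.toLinearMap.flip ψ))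
            (Coalgebra.comul (R := K) u)))
    (S : Submonoid A)
    (hOreL : ∀ (a : A) (s : S), ∃ (a' : A) (s' : S), (s' : A) * a = a' * (s : A))
    (hOreR : ∀ (a : A) (s : S), ∃ (a' : A) (s' : S), a * (s' : A) = (s : A) * a')
    (ι : A →ₐ[K] B) (hinj : Function.Injective ι)
    (hS : ∀ s : S, IsUnit (ι s))
    (hfrac : ∀ b : B, ∃ (s : S) (a : A), (ι s) * b = ι a)
    (X : Set H) (hgen : Algebra.adjoin K X = ⊤)
    (ρ σ : H →ₐ[K] Module.End K B)
    (hρcompat : ∀ (u : H) (a : A), ρ u (ι a) = ι (act0 u a))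
    (hσcompat : ∀ (u : H) (a : A), σ u (ι a) = ι (act0 u a))
    (hρmul : ∀ (u : H) (x y : B),
      ρ u (x * y) =
        (LinearMap.mul' K B)
          ((TensorProduct.map (ρ.toLinearMap.flip x) (ρ.toLinearMap.flip y))
            (Coalgebra.comul (R := K) u)))
    (hσmul : ∀ (u : H) (x y : B),
      σ u (x * y) =
        (LinearMap.mul' K B)
          ((TensorProduct.map (σ.toLinearMap.flip x) (σ.toLinearMap.flip y))
            (Coalgebra.comul (R := K) u)))
    (hX : ∀ x ∈ X,
      (Coalgebra.comul (R := K) x = x ⊗ₜ[K] x ∧ Coalgebra.counit (R := K) x = (1 : K) ∧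
        IsUnit x ∧ IsUnit (ρ x) ∧ IsUnit (σ x)) ∨
      (∃ g ∈ X, ∃ g' ∈ X,
        (Coalgebra.comul (R := K) g = g ⊗ₜ[K] g ∧
          Coalgebra.counit (R := K) g = (1 : K) ∧ IsUnit g ∧
          IsUnit (ρ g) ∧ IsUnit (σ g)) ∧
        (Coalgebra.comul (R := K) g' = g' ⊗ₜ[K] g' ∧
          Coalgebra.counit (R := K) g' = (1 : K) ∧ IsUnit g' ∧
          IsUnit (ρ g') ∧ IsUnit (σ g')) ∧
        Coalgebra.comul (R := K) x = x ⊗ₜ[K] g + g' ⊗ₜ[K] x)) :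
    ρ = σ := by
  -- For a grouplike element, any action satisfying the module-algebra law is
  -- multiplicative.
  have hmulG : ∀ (τ : H →ₐ[K] Module.End K B),
      (∀ (u : H) (x y : B),
        τ u (x * y) =
          (LinearMap.mul' K B)
            ((TensorProduct.map (τ.toLinearMap.flip x) (τ.toLinearMap.flip y))
              (Coalgebra.comul (R := K) u))) →
      ∀ u : H, Coalgebra.comul (R := K) u = u ⊗ₜ[K] u →
      ∀ x y : B, τ u (x * y) = τ u x * τ u y := by
    intro τ hτ u hu x y
    rw [hτ, hu]
    simp [LinearMap.mul'_apply]
  -- Any compatible action sends `1` to `1` when the counit is `1`.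
  have honeG : ∀ (τ : H →ₐ[K] Module.End K B),
      (∀ (u : H) (a : A), τ u (ι a) = ι (act0 u a)) →
      ∀ u : H, Coalgebra.counit (R := K) u = (1 : K) → τ u (1 : B) = 1 := by
    intro τ hτc u hε
    have h1 : τ u (ι 1) = ι (act0 u 1) := hτc u 1
    rw [hact0_one, hε, one_smul, map_one] at h1
    simpa using h1
  -- For a grouplike element, the action sends `ι s` to a unit.
  have hunitG : ∀ (τ : H →ₐ[K] Module.End K B),
      (∀ (u : H) (a : A), τ u (ι a) = ι (act0 u a)) →
      (∀ (u : H) (x y : B),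
        τ u (x * y) =
          (LinearMap.mul' K B)
            ((TensorProduct.map (τ.toLinearMap.flip x) (τ.toLinearMap.flip y))
              (Coalgebra.comul (R := K) u))) →
      ∀ u : H, Coalgebra.comul (R := K) u = u ⊗ₜ[K] u →
        Coalgebra.counit (R := K) u = (1 : K) →
      ∀ s : S, IsUnit (τ u (ι s)) := by
    intro τ hτc hτm u hu hε s
    obtain ⟨t, ht⟩ := hS s
    refine ⟨⟨τ u (ι s), τ u ↑t⁻¹, ?_, ?_⟩, rfl⟩
    · rw [← hmulG τ hτm u hu]
      rw [← ht, Units.mul_inv]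
      exact honeG τ hτc u hε
    · rw [← hmulG τ hτm u hu]
      rw [← ht, Units.inv_mul]
      exact honeG τ hτc u hε
  -- Grouplike elements act the same under `ρ` and `σ`.
  have hgroup : ∀ u : H, Coalgebra.comul (R := K) u = u ⊗ₜ[K] u →
      Coalgebra.counit (R := K) u = (1 : K) → ρ u = σ u := by
    intro u hu hε
    ext b
    obtain ⟨s, a, hsa⟩ := hfrac b
    have hρb : ι (act0 u s) * ρ u b = ι (act0 u a) := by
      rw [← hρcompat, ← hmulG ρ hρmul u hu, hsa, hρcompat]
    have hσb : ι (act0 u s) * σ u b = ι (act0 u a) := by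
      rw [← hσcompat, ← hmulG σ hσmul u hu, hsa, hσcompat]
    have hu' : IsUnit (ι (act0 u s)) := by
      rw [← hρcompat]; exact hunitG ρ hρcompat hρmul u hu hε s
    exact hu'.mul_left_cancel (hρb.trans hσb.symm)
  -- Generators act the same.
  have hgen' : ∀ x ∈ X, ρ x = σ x := by
    intro x hx
    rcases hX x hx with ⟨hcx, hεx, -⟩ | ⟨g, hg, g', hg', ⟨hcg, hεg, -⟩, ⟨hcg', hεg', -⟩, hcx⟩
    · exact hgroup x hcx hεx
    · have hgeq := hgroup g hcg hεg
      have hg'eq := hgroup g' hcg' hεg'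
      ext b
      obtain ⟨s, a, hsa⟩ := hfrac b
      have hskew : ∀ (τ : H →ₐ[K] Module.End K B),
          (∀ (u : H) (x y : B),
            τ u (x * y) =
              (LinearMap.mul' K B)
                ((TensorProduct.map (τ.toLinearMap.flip x) (τ.toLinearMap.flip y))
                  (Coalgebra.comul (R := K) u))) →
          ∀ y z : B, τ x (y * z) = τ x y * τ g z + τ g' y * τ x z := by
        intro τ hτ y z
        rw [hτ, hcx]
        simp [LinearMap.mul'_apply]
      have hρb : ι (act0 x s) * ρ g b + ι (act0 g' s) * ρ x b = ι (act0 x a) := by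
        rw [← hρcompat x s, ← hρcompat g' s, ← hskew ρ hρmul, hsa, hρcompat]
      have hσb : ι (act0 x s) * σ g b + ι (act0 g' s) * σ x b = ι (act0 x a) := by
        rw [← hσcompat x s, ← hσcompat g' s, ← hskew σ hσmul, hsa, hσcompat]
      have hgb : ρ g b = σ g b := by rw [hgeq]
      rw [← hgb] at hσb
      have hu' : IsUnit (ι (act0 g' s)) := by
        rw [← hρcompat]; exact hunitG ρ hρcompat hρmul g' hcg' hεg' s
      have : ι (act0 g' s) * ρ x b = ι (act0 g' s) * σ x b := by
        have := hρb.trans hσb.symm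
        exact add_left_cancel this
      exact hu'.mul_left_cancel this
  exact AlgHom.ext_of_adjoin_eq_top hgen hgen'
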